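/- Let A:[T,∞)→(0,∞) be locally absolutely continuous and F:[T,∞)→ℝ be right-continuous and nondecreasing with A'(t)=t^{n-3}F(t) for a.e. t≥T (where n≥3 is a fixed integer). Suppose F(T)>0 and the inequality F dA ≤ 2A dF holds as Radon measures on [T,∞). Then there exists c>0 such that A(t) ≥ c·t^{2n-4} for all sufficiently large t. -/

import Mathlib

open MeasureTheory Set Filter

namespace Stmt1Aux

noncomputable def eps (j : ℕ) : ℝ := 1 / (4 * (j + 2))

lemma eps_pos (j : ℕ) : 0 < eps j := by unfold eps; positivity

lemma eps_le (j : ℕ) : eps j ≤ 1 / 8 := by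
  unfold eps
  rw [div_le_div_iff₀ (by positivity) (by norm_num)]
  have : (0:ℝ) ≤ (j:ℝ) := Nat.cast_nonneg j
  nlinarith

lemma theta_step (j : ℕ) :
    (1 - 1/((j:ℝ)+2)) ≤ (1 - 1/((j:ℝ)+3)) * ((1 - 2*eps j) * (1 + eps j)^2) := by
  have hj : (0:ℝ) ≤ (j:ℝ) := Nat.cast_nonneg j
  unfold eps
  have h2 : (0:ℝ) < (j:ℝ)+2 := by linarith
  have h3 : (0:ℝ) < (j:ℝ)+3 := by linarith
  field_simp
  ring_nf
  nlinarith [sq_nonneg ((j:ℝ)), sq_nonneg ((j:ℝ)+2), mul_nonneg hj (mul_nonneg hj hj), sq_nonneg ((j:ℝ)*(j:ℝ))]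

lemma half_mul (x y : ℝ) (hy : y ≠ 0) : x = 2 * (x/y^2) * (1 - 1/((0:ℝ)+2)) * y^2 := by
  field_simp; ring

noncomputable def tau (F : ℝ → ℝ) (T₁ : ℝ) : ℕ → ℝ
  | 0 => T₁
  | j+1 => sInf {s : ℝ | tau F T₁ j < s ∧ (1 + eps j) * F (tau F T₁ j) < F s}

lemma tau_zero (F : ℝ → ℝ) (T₁ : ℝ) : tau F T₁ 0 = T₁ := rfl

lemma tau_succ (F : ℝ → ℝ) (T₁ : ℝ) (j : ℕ) :
    tau F T₁ (j+1) = sInf {s : ℝ | tau F T₁ j < s ∧ (1 + eps j) * F (tau F T₁ j) < F s} := rfl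

end Stmt1Aux

open Stmt1Aux

set_option maxHeartbeats 4000000 in
theorem stmt_1 (n : ℕ) (hn : 3 ≤ n) (T : ℝ) (A : ℝ → ℝ) (F : StieltjesFunction ℝ)
    (hApos : ∀ t, T ≤ t → 0 < A t)
    (hAcont : ContinuousOn A (Ici T))
    (hFTC : ∀ a b : ℝ, T ≤ a → a ≤ b → A b - A a = ∫ t in a..b, t ^ (n - 3) * F t)
    (hFT : 0 < F T)
    (hmeas : ∀ E : Set ℝ, MeasurableSet E → E ⊆ Ici T →
      ∫ t in E, F t * (t ^ (n - 3) * F t) ≤ 2 * ∫ t in E, A t ∂F.measure) :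
    ∃ c > 0, ∀ᶠ t in atTop, c * t ^ (2 * n - 4) ≤ A t := by
  classical
  set T₁ : ℝ := max T 1 with hT₁def
  have hTT₁ : T ≤ T₁ := le_max_left _ _
  have hT₁1 : (1:ℝ) ≤ T₁ := le_max_right _ _
  have hT₁0 : (0:ℝ) < T₁ := lt_of_lt_of_le one_pos hT₁1
  have hF0 : ∀ t, T ≤ t → 0 < F t := fun t ht => hFT.trans_le (F.mono ht)
  have hFT₁ : 0 < F T₁ := hF0 _ hTT₁
  have hAT₁ : 0 < A T₁ := hApos _ hTT₁
  -- measurability / integrability facts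
  have hmble : Measurable fun t : ℝ => t ^ (n-3) * F t :=
    (measurable_id.pow_const _).mul F.mono.measurable
  have habs : ∀ a b t : ℝ, t ∈ Ioc a b → |F t| ≤ max |F a| |F b| := by
    intro a b t ht
    exact abs_le_max_abs_abs (F.mono ht.1.le) (F.mono ht.2)
  have habs' : ∀ a b t : ℝ, t ∈ Ioc a b → |t| ≤ max |a| |b| := by
    intro a b t ht
    exact abs_le_max_abs_abs ht.1.le ht.2
  have hintFIoc : ∀ a b : ℝ, IntegrableOn (fun t => t ^ (n-3) * F t) (Ioc a b) := by
    intro a b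
    apply Measure.integrableOn_of_bounded (M := (max |a| |b|) ^ (n-3) * max |F a| |F b|)
      (by simp) hmble.aestronglyMeasurable
    rw [ae_restrict_iff' measurableSet_Ioc]
    filter_upwards with t ht
    rw [Real.norm_eq_abs, abs_mul, abs_pow]
    exact mul_le_mul (pow_le_pow_left₀ (abs_nonneg t) (habs' a b t ht) _)
      (habs a b t ht) (abs_nonneg _) (by positivity)
  have hintF2Ioc : ∀ a b : ℝ,
      IntegrableOn (fun t => F t * (t ^ (n-3) * F t)) (Ioc a b) := by
    intro a b
    apply Measure.integrableOn_of_bounded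
      (M := (max |F a| |F b|) * ((max |a| |b|) ^ (n-3) * max |F a| |F b|))
      (by simp) (F.mono.measurable.mul hmble).aestronglyMeasurable
    rw [ae_restrict_iff' measurableSet_Ioc]
    filter_upwards with t ht
    rw [Real.norm_eq_abs, Pi.mul_apply, abs_mul, abs_mul, abs_pow]
    refine mul_le_mul (habs a b t ht) ?_ (by positivity) (by positivity)
    exact mul_le_mul (pow_le_pow_left₀ (abs_nonneg t) (habs' a b t ht) _)
      (habs a b t ht) (abs_nonneg _) (by positivity)
  have hintII : ∀ a b : ℝ, IntervalIntegrable (fun t => t ^ (n-3) * F t) volume a b :=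
    fun a b => ⟨hintFIoc a b, hintFIoc b a⟩
  -- A is monotone on [T,∞) ∩ [0,∞)
  have hAmono : ∀ a b : ℝ, T ≤ a → 0 ≤ a → a ≤ b → A a ≤ A b := by
    intro a b hTa ha0 hab
    have h := hFTC a b hTa hab
    have h2 : 0 ≤ ∫ t in a..b, t ^ (n-3) * F t := by
      apply intervalIntegral.integral_nonneg hab
      intro u hu
      have hu0 : 0 ≤ u := le_trans ha0 hu.1
      have hFu : 0 < F u := hF0 u (le_trans hTa hu.1)
      positivity
    linarith
  -- growth lower bound
  have hgrow2 : ∀ a b : ℝ, T₁ ≤ a → a ≤ b → A a + F a * a^(n-3) * (b - a) ≤ A b := by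
    intro a b ha hab
    have hTa : T ≤ a := hTT₁.trans ha
    have h := hFTC a b hTa hab
    have h1a : (1:ℝ) ≤ a := hT₁1.trans ha
    have hFa : 0 < F a := hF0 a hTa
    have hmono : ∫ t in a..b, (F a * a^(n-3) : ℝ) ≤ ∫ t in a..b, t ^ (n-3) * F t := by
      apply intervalIntegral.integral_mono_on hab intervalIntegrable_const (hintII a b)
      intro u hu
      have h1 : (1:ℝ) ≤ u := h1a.trans hu.1
      have h2 : F a ≤ F u := F.mono hu.1
      have h3 : a^(n-3) ≤ u^(n-3) := pow_le_pow_left₀ (by linarith) hu.1 _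
      have h4 : (0:ℝ) ≤ a^(n-3) := by positivity
      nlinarith
    rw [intervalIntegral.integral_const, smul_eq_mul] at hmono
    nlinarith
  -- star inequality from the measure hypothesis
  have hstar : ∀ a b : ℝ, T₁ ≤ a → a ≤ b →
      F a * (A b - A a) ≤ 2 * (A b * (F b - F a)) := by
    intro a b ha hab
    have hTa : T ≤ a := hTT₁.trans ha
    have hE : MeasurableSet (Ioc a b) := measurableSet_Ioc
    have hsub : Ioc a b ⊆ Ici T := fun t ht => le_trans hTa ht.1.le
    have hkey := hmeas (Ioc a b) hE hsub
    have h1a : (1:ℝ) ≤ a := hT₁1.trans ha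
    -- lower bound for LHS
    have hlow : F a * (A b - A a) ≤ ∫ t in Ioc a b, F t * (t ^ (n-3) * F t) := by
      have h1 : ∫ t in Ioc a b, F a * (t ^ (n-3) * F t) ≤
          ∫ t in Ioc a b, F t * (t ^ (n-3) * F t) := by
        apply setIntegral_mono_on ((hintFIoc a b).const_mul _) (hintF2Ioc a b) hE
        intro t ht
        have h2 : F a ≤ F t := F.mono ht.1.le
        have h3 : 0 ≤ t ^ (n-3) * F t := by
          have : (0:ℝ) < t := lt_of_lt_of_le (by linarith) ht.1.le
          have := hF0 t (hTa.trans ht.1.le)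
          positivity
        exact mul_le_mul_of_nonneg_right h2 h3
      have h2 : ∫ t in Ioc a b, F a * (t ^ (n-3) * F t) = F a * (A b - A a) := by
        rw [integral_const_mul, hFTC a b hTa hab, intervalIntegral.integral_of_le hab]
      linarith
    -- upper bound for RHS
    have hintA : IntegrableOn A (Ioc a b) F.measure := by
      rcases le_or_gt a b with h | h
      · exact ((hAcont.mono (Icc_subset_Ici_self.trans (Ici_subset_Ici.2 hTa) : Icc a b ⊆ Ici T)).integrableOn_Icc).mono_set
          Ioc_subset_Icc_self
      · simp [Ioc_eq_empty h.not_gt]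
    have hup : ∫ t in Ioc a b, A t ∂F.measure ≤ A b * (F b - F a) := by
      have hle : ∫ t in Ioc a b, A t ∂F.measure ≤ ∫ _t in Ioc a b, (A b : ℝ) ∂F.measure := by
        apply setIntegral_mono_on hintA (integrableOn_const ?_) hE
        · intro t ht
          exact hAmono t b (hTa.trans ht.1.le) (le_trans (by linarith) ht.1.le) ht.2
        · rw [F.measure_Ioc]; exact ENNReal.ofReal_ne_top
      rw [setIntegral_const, smul_eq_mul, measureReal_def, F.measure_Ioc,
        ENNReal.toReal_ofReal (sub_nonneg.2 (F.mono hab))] at hle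
      nlinarith [hle]
    nlinarith [hkey, hlow, hup]
  -- the basic step estimate
  have hstep : ∀ a t : ℝ, ∀ j : ℕ, T₁ ≤ a → a ≤ t → F t ≤ (1 + eps j) * F a →
      A t * (1 - 2 * eps j) ≤ A a := by
    intro a t j ha hat hFt
    have hs := hstar a t ha hat
    have hFa : 0 < F a := hF0 a (hTT₁.trans ha)
    have hAt : 0 < A t := hApos t (le_trans (hTT₁.trans ha) hat)
    have he := eps_pos j
    have h3 : F a * (A t - A a) ≤ F a * (2 * eps j * A t) := by nlinarith
    have h4 : A t - A a ≤ 2 * eps j * A t := le_of_mul_le_mul_left h3 hFa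
    linarith
  set τ : ℕ → ℝ := tau (fun x => F x) T₁ with hτdef
  have hstruct : ∀ j : ℕ, T₁ ≤ τ j →
      τ j < τ (j+1) ∧
      (∀ t, τ j ≤ t → t < τ (j+1) → F t ≤ (1 + eps j) * F (τ j)) ∧
      (1 + eps j) * F (τ j) ≤ F (τ (j+1)) ∧
      A (τ (j+1)) * (1 - 2 * eps j) ≤ A (τ j) := by
    intro j hj
    have hTτ : T ≤ τ j := hTT₁.trans hj
    have hFτ : 0 < F (τ j) := hF0 _ hTτ
    have he := eps_pos j
    have he8 := eps_le j
    set c : ℝ := (1 + eps j) * F (τ j) with hc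
    have hFc : F (τ j) < c := by nlinarith
    set S : Set ℝ := {s : ℝ | τ j < s ∧ c < F s} with hS
    have hτsucc : τ (j+1) = sInf S := tau_succ _ _ j
    have hup : ∀ ⦃s t : ℝ⦄, s ∈ S → s ≤ t → t ∈ S := by
      intro s t hs hst
      exact ⟨lt_of_lt_of_le hs.1 hst, lt_of_lt_of_le hs.2 (F.mono hst)⟩
    -- S is nonempty
    have hSne : S.Nonempty := by
      by_contra hemp
      rw [Set.not_nonempty_iff_eq_empty] at hemp
      have hb : ∀ t, τ j ≤ t → A t * (1 - 2 * eps j) ≤ A (τ j) := by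
        intro t ht
        have hFtc : F t ≤ c := by
          by_contra hlt
          push_neg at hlt
          rcases eq_or_lt_of_le ht with h | h
          · rw [← h] at hlt; linarith
          · have : t ∈ S := ⟨h, hlt⟩
            rw [hemp] at this; exact this
        exact hstep (τ j) t j hj ht hFtc
      set b : ℝ := τ j + (A (τ j) + 1) / F T with hb'
      have hbge : τ j ≤ b := by
        have : 0 < (A (τ j) + 1) / F T := by
          have := hApos _ hTτ; positivity
        simp only [hb']; linarith
      have h1 := hgrow2 (τ j) b hj hbge
      have h2 := hb b hbge
      have hAτ := hApos _ hTτ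
      -- F (τ j) * (τ j)^(n-3) ≥ F T
      have h3 : F T ≤ F (τ j) * (τ j)^(n-3) := by
        have h1a : (1:ℝ) ≤ τ j := hT₁1.trans hj
        have h4 : (1:ℝ) ≤ (τ j)^(n-3) := one_le_pow₀ h1a
        nlinarith [F.mono hTτ]
      have h5 : F T * (b - τ j) = A (τ j) + 1 := by
        simp only [hb']; field_simp; ring
      have hbτ : 0 ≤ b - τ j := by linarith
      have h7 := mul_le_mul_of_nonneg_right h3 hbτ
      have h6 : A (τ j) + (A (τ j) + 1) ≤ A b := by linarith
      have h9 : (3/4:ℝ) ≤ 1 - 2*eps j := by linarith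
      have h10 : A b * (3/4) ≤ A b * (1-2*eps j) :=
        mul_le_mul_of_nonneg_left h9 (by linarith)
      linarith
    have hbdd : BddBelow S := ⟨τ j, fun s hs => hs.1.le⟩
    have hinfge : τ j ≤ sInf S := le_csInf hSne (fun s hs => hs.1.le)
    -- strict inequality via right continuity
    have hlt : τ j < τ (j+1) := by
      have hcont : Filter.Tendsto F (nhdsWithin (τ j) (Ici (τ j))) (nhds (F (τ j))) :=
        F.right_continuous (τ j)
      have hev : F ⁻¹' (Iio c) ∈ nhdsWithin (τ j) (Ici (τ j)) := hcont (Iio_mem_nhds hFc)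
      rw [Metric.mem_nhdsWithin_iff] at hev
      obtain ⟨δ, hδ0, hδ⟩ := hev
      have hlb : ∀ s ∈ S, τ j + δ/2 ≤ s := by
        intro s hs
        by_contra hcon
        push_neg at hcon
        have hball : s ∈ Metric.ball (τ j) δ ∩ Ici (τ j) := by
          constructor
          · rw [Metric.mem_ball, Real.dist_eq, abs_lt]
            constructor <;> [linarith [hs.1]; linarith [hs.1]]
          · exact hs.1.le
        have := hδ hball
        simp only [mem_preimage, mem_Iio] at this
        exact absurd hs.2 (by linarith)
      have : τ j + δ/2 ≤ sInf S := le_csInf hSne hlb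
      rw [hτsucc]; linarith
    -- between property
    have hbet : ∀ t, τ j ≤ t → t < τ (j+1) → F t ≤ (1 + eps j) * F (τ j) := by
      intro t ht htlt
      rcases eq_or_lt_of_le ht with h | h
      · rw [← h]; nlinarith
      · by_contra hcon
        push_neg at hcon
        have : t ∈ S := ⟨h, hcon⟩
        have := csInf_le hbdd this
        rw [hτsucc] at htlt; linarith
    -- jump property
    have hjump : (1 + eps j) * F (τ j) ≤ F (τ (j+1)) := by
      have hrc : Filter.Tendsto F (nhdsWithin (τ (j+1)) (Ioi (τ (j+1)))) (nhds (F (τ (j+1)))) :=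
        (F.right_continuous (τ (j+1))).mono_left (nhdsWithin_mono _ Ioi_subset_Ici_self)
      refine ge_of_tendsto hrc ?_
      refine eventually_nhdsWithin_of_forall (fun t ht => ?_)
      rw [mem_Ioi] at ht
      rw [hτsucc] at ht
      obtain ⟨s, hsS, hst⟩ := exists_lt_of_csInf_lt hSne ht
      exact le_trans hsS.2.le (F.mono hst.le)
    -- limit property for A
    have hAstep : A (τ (j+1)) * (1 - 2 * eps j) ≤ A (τ j) := by
      have hmem : τ (j+1) ∈ Ici T := le_trans hTτ (le_trans hinfge (le_of_eq hτsucc.symm))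
      have hsub2 : Ioo (τ j) (τ (j+1)) ⊆ Ici T := fun t ht => hTτ.trans ht.1.le
      have hAc : Filter.Tendsto (fun t => A t * (1 - 2 * eps j))
          (nhdsWithin (τ (j+1)) (Ioo (τ j) (τ (j+1)))) (nhds (A (τ (j+1)) * (1 - 2 * eps j))) := by
        exact ((hAcont.continuousWithinAt hmem).mono hsub2).mul tendsto_const_nhds
      haveI := right_nhdsWithin_Ioo_neBot hlt
      refine le_of_tendsto hAc ?_
      refine eventually_nhdsWithin_of_forall (fun t ht => ?_)
      exact hstep (τ j) t j hj ht.1.le (hbet t ht.1.le ht.2)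
    exact ⟨hlt, hbet, hjump, hAstep⟩
  -- main invariant by induction
  set u₀ : ℝ := A T₁ / (F T₁)^2 with hu₀def
  have hu₀pos : 0 < u₀ := by positivity
  have hinv : ∀ j : ℕ, T₁ ≤ τ j ∧
      F T * (1 + ∑ i ∈ Finset.range j, eps i) ≤ F (τ j) ∧
      A (τ j) ≤ 2 * u₀ * (1 - 1/((j:ℝ)+2)) * (F (τ j))^2 := by
    intro j
    induction j with
    | zero =>
      refine ⟨le_refl _, by simpa using (F.mono hTT₁ : F T ≤ F (τ 0)), ?_⟩
      have hτ0 : τ 0 = T₁ := rfl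
      have h0 : ((0:ℕ):ℝ) = 0 := Nat.cast_zero
      rw [hτ0, h0, hu₀def]
      exact le_of_eq (half_mul (A T₁) (F T₁) (ne_of_gt hFT₁))
    | succ j ih =>
      obtain ⟨hj, hFlow, hAup⟩ := ih
      obtain ⟨hlt, hbet, hjump, hAstep⟩ := hstruct j hj
      have he := eps_pos j
      have he8 := eps_le j
      have hFτ : 0 < F (τ j) := hF0 _ (hTT₁.trans hj)
      have hsnn : 0 ≤ ∑ i ∈ Finset.range j, eps i :=
        Finset.sum_nonneg (fun i _ => (eps_pos i).le)
      have hFTτ : F T ≤ F (τ j) := by nlinarith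
      refine ⟨hj.trans hlt.le, ?_, ?_⟩
      · rw [Finset.sum_range_succ]
        have h1 : F (τ j) + eps j * F T ≤ (1 + eps j) * F (τ j) := by nlinarith
        calc F T * (1 + (∑ i ∈ Finset.range j, eps i + eps j))
            = F T * (1 + ∑ i ∈ Finset.range j, eps i) + eps j * F T := by ring
          _ ≤ F (τ j) + eps j * F T := by linarith
          _ ≤ (1 + eps j) * F (τ j) := h1
          _ ≤ F (τ (j+1)) := hjump
      · have hθ := theta_step j
        have h2e : (0:ℝ) < 1 - 2 * eps j := by linarith
        have hθ1 : (0:ℝ) ≤ 1 - 1/((j:ℝ)+3) := by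
          have : (0:ℝ) < (j:ℝ)+3 := by positivity
          have : 1/((j:ℝ)+3) ≤ 1 := by
            rw [div_le_one this]; linarith [Nat.cast_nonneg (α := ℝ) j]
          linarith
        have hFj1 : ((1 + eps j) * F (τ j))^2 ≤ (F (τ (j+1)))^2 := by
          apply pow_le_pow_left₀ (by positivity) hjump
        -- A (τ (j+1)) * (1-2ε) ≤ A (τ j) ≤ 2u₀ θ_j F(τj)²
        --   ≤ 2u₀ θ_{j+1} (1-2ε)(1+ε)² F(τj)² ≤ (1-2ε) · (2 u₀ θ_{j+1} F(τ(j+1))²)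
        have step1 : A (τ (j+1)) * (1 - 2*eps j) ≤
            2 * u₀ * ((1 - 1/((j:ℝ)+3)) * ((1 - 2*eps j) * (1 + eps j)^2)) * (F (τ j))^2 := by
          have := mul_le_mul_of_nonneg_right
            (mul_le_mul_of_nonneg_left hθ (by positivity : (0:ℝ) ≤ 2*u₀))
            (sq_nonneg (F (τ j)))
          linarith [hAstep, hAup]
        have step2 : 2 * u₀ * ((1 - 1/((j:ℝ)+3)) * ((1 - 2*eps j) * (1 + eps j)^2)) * (F (τ j))^2
            ≤ (1 - 2*eps j) * (2 * u₀ * (1 - 1/((j:ℝ)+3)) * (F (τ (j+1)))^2) := by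
          have h5 : 2 * u₀ * (1 - 1/((j:ℝ)+3)) * ((1 + eps j) * F (τ j))^2 ≤
              2 * u₀ * (1 - 1/((j:ℝ)+3)) * (F (τ (j+1)))^2 := by
            apply mul_le_mul_of_nonneg_left hFj1 (by positivity)
          calc 2 * u₀ * ((1 - 1/((j:ℝ)+3)) * ((1 - 2*eps j) * (1 + eps j)^2)) * (F (τ j))^2
              = (1 - 2*eps j) * (2 * u₀ * (1 - 1/((j:ℝ)+3)) * ((1 + eps j) * F (τ j))^2) := by
                ring
            _ ≤ (1 - 2*eps j) * (2 * u₀ * (1 - 1/((j:ℝ)+3)) * (F (τ (j+1)))^2) := by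
                apply mul_le_mul_of_nonneg_left h5 h2e.le
        have step3 : A (τ (j+1)) ≤ 2 * u₀ * (1 - 1/((j:ℝ)+3)) * (F (τ (j+1)))^2 := by
          have := (step1.trans step2)
          have h6 := (mul_le_mul_iff_of_pos_right h2e).mp (by linarith [this] :
            A (τ (j+1)) * (1 - 2*eps j) ≤ (2 * u₀ * (1 - 1/((j:ℝ)+3)) * (F (τ (j+1)))^2) * (1 - 2*eps j))
          exact h6
        have hcast : ((j+1:ℕ):ℝ) + 2 = (j:ℝ) + 3 := by push_cast; ring
        rw [hcast]
        exact step3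
  -- τ is unbounded
  have hτunb : ∀ M : ℝ, ∃ j, M < τ j := by
    intro M
    by_contra hcon
    push_neg at hcon
    have hsum : Filter.Tendsto (fun j => ∑ i ∈ Finset.range j, eps i) atTop atTop := by
      have h8 : ∀ i : ℕ, (1/8) * (1/((i:ℝ)+1)) ≤ eps i := by
        intro i
        unfold eps
        rw [div_mul_div_comm, one_mul, div_le_div_iff₀ (by positivity) (by positivity)]
        have : (0:ℝ) ≤ (i:ℝ) := Nat.cast_nonneg i
        nlinarith
      have hharm := Real.tendsto_sum_range_one_div_nat_succ_atTop
      have hconst := hharm.const_mul_atTop (show (0:ℝ) < 1/8 by norm_num)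
      refine tendsto_atTop_mono (fun j => ?_) hconst
      rw [Finset.mul_sum]
      exact Finset.sum_le_sum (fun i _ => h8 i)
    obtain ⟨j, hjsum⟩ := (hsum.eventually_ge_atTop ((F M - F T)/F T + 1)).exists
    have h1 := (hinv j).2.1
    have h2 : F (τ j) ≤ F M := F.mono (hcon j)
    have h3 : F T * ((F M - F T)/F T + 1 + 1) = F M + F T := by field_simp; ring
    nlinarith [mul_le_mul_of_nonneg_left hjsum hFT.le]
  -- master bound : A t ≤ 3 u₀ F t ^ 2
  have hmaster : ∀ t, T₁ ≤ t → A t ≤ (3*u₀) * (F t)^2 := by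
    intro t ht
    have hne : ∃ j, t < τ j := hτunb t
    obtain ⟨j, hjlt, hjle⟩ : ∃ j : ℕ, t < τ (j+1) ∧ τ j ≤ t := by
      have hfind := Nat.find_spec hne
      have h0 : Nat.find hne ≠ 0 := by
        intro h0
        rw [h0] at hfind
        have : τ 0 = T₁ := rfl
        rw [this] at hfind; linarith
      obtain ⟨j, hjk⟩ := Nat.exists_eq_succ_of_ne_zero h0
      rw [hjk] at hfind
      refine ⟨j, hfind, ?_⟩
      have := Nat.find_min hne (m := j) (by omega)
      push_neg at this
      exact this
    obtain ⟨hjT, hFlow, hAup⟩ := hinv j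
    obtain ⟨hlt, hbet, hjump, hAstep⟩ := hstruct j hjT
    have he := eps_pos j
    have he8 := eps_le j
    have hFt : F t ≤ (1 + eps j) * F (τ j) := hbet t hjle hjlt
    have h1 : A t * (1 - 2*eps j) ≤ A (τ j) := hstep (τ j) t j hjT hjle hFt
    have hFmono : F (τ j) ≤ F t := F.mono hjle
    have hFτ : 0 < F (τ j) := hF0 _ (hTT₁.trans hjT)
    have hF2 : (F (τ j))^2 ≤ (F t)^2 := by nlinarith
    have hAt : 0 < A t := hApos t (hTT₁.trans (hjT.trans hjle))
    have hθle : (1 - 1/((j:ℝ)+2)) ≤ 1 := by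
      have : (0:ℝ) < (j:ℝ)+2 := by positivity
      have : 0 ≤ 1/((j:ℝ)+2) := by positivity
      linarith
    have h2 : A (τ j) ≤ 2 * u₀ * (F (τ j))^2 := by
      have h5 : (2*u₀) * (1 - 1/((j:ℝ)+2)) ≤ (2*u₀) * 1 :=
        mul_le_mul_of_nonneg_left hθle (by positivity)
      have h6 := mul_le_mul_of_nonneg_right h5 (sq_nonneg (F (τ j)))
      nlinarith
    have h3 : A t * (3/4) ≤ A (τ j) := by
      have h4 := mul_le_mul_of_nonneg_left (show (3/4:ℝ) ≤ 1 - 2*eps j by linarith) hAt.le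
      linarith
    have h7 := mul_le_mul_of_nonneg_left hF2 (by positivity : (0:ℝ) ≤ 2*u₀)
    have h8 : (0:ℝ) ≤ u₀ * (F t)^2 := by positivity
    linarith
  -- square-root lower bound for F
  set K : ℝ := 3 * u₀ with hKdef
  have hKpos : 0 < K := by positivity
  have hFsqrt : ∀ t, T₁ ≤ t → Real.sqrt (A t / K) ≤ F t := by
    intro t ht
    have h1 : A t / K ≤ (F t)^2 := by
      rw [div_le_iff₀ hKpos]
      nlinarith [hmaster t ht]
    calc Real.sqrt (A t / K) ≤ Real.sqrt ((F t)^2) := Real.sqrt_le_sqrt h1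
      _ = F t := Real.sqrt_sq (hF0 t (hTT₁.trans ht)).le
  set m : ℕ := n - 2 with hmdef
  have hm1 : 1 ≤ m := by omega
  have hn3 : n - 3 = m - 1 := by omega
  have h2n4 : 2 * n - 4 = 2 * m := by omega
  set lam : ℝ := 2 ^ m with hlamdef
  have hlam2 : (2:ℝ) ≤ lam := by
    rw [hlamdef]
    calc (2:ℝ) = 2^1 := (pow_one 2).symm
      _ ≤ 2^m := pow_le_pow_right₀ one_le_two hm1
  have hlampos : (0:ℝ) < lam := by linarith
  have hlam1 : (1:ℝ) < lam^2 := by nlinarith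
  set δ : ℝ := min (A T₁) (1/(K*(lam^2-1)^2)) with hδdef
  have hδpos : 0 < δ := by
    apply lt_min hAT₁
    have h1 : (0:ℝ) < lam^2 - 1 := by linarith
    positivity
  have hcond : δ * (lam^2 - 1) ≤ Real.sqrt (δ / K) := by
    have hl1 : (0:ℝ) < lam^2 - 1 := by linarith
    have hsqK : 0 < Real.sqrt K := Real.sqrt_pos.2 hKpos
    have hs1 : Real.sqrt δ ≤ 1/(Real.sqrt K * (lam^2-1)) := by
      have he : (1/(Real.sqrt K*(lam^2-1)))^2 = 1/(K*(lam^2-1)^2) := by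
        rw [div_pow, one_pow, mul_pow, Real.sq_sqrt hKpos.le]
      have h2 : δ ≤ (1/(Real.sqrt K*(lam^2-1)))^2 := by
        rw [he, hδdef]; exact min_le_right _ _
      have h3 := Real.sqrt_le_sqrt h2
      rwa [Real.sqrt_sq (by positivity)] at h3
    have hδs : δ = Real.sqrt δ * Real.sqrt δ := (Real.mul_self_sqrt hδpos.le).symm
    have hdiv : Real.sqrt (δ/K) = Real.sqrt δ / Real.sqrt K := Real.sqrt_div hδpos.le K
    rw [hdiv]
    have h3 : Real.sqrt δ * (lam^2-1) ≤ (Real.sqrt K)⁻¹ := by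
      have h4 := mul_le_mul_of_nonneg_right hs1 hl1.le
      have heq : 1/(Real.sqrt K*(lam^2-1)) * (lam^2-1) = (Real.sqrt K)⁻¹ := by
        field_simp
      rw [heq] at h4; exact h4
    calc δ * (lam^2-1) = Real.sqrt δ * (Real.sqrt δ * (lam^2-1)) := by
          conv_lhs => rw [hδs]
          ring
      _ ≤ Real.sqrt δ * (Real.sqrt K)⁻¹ := mul_le_mul_of_nonneg_left h3 (Real.sqrt_nonneg δ)
      _ = Real.sqrt δ / Real.sqrt K := by rw [div_eq_mul_inv]
  -- dyadic induction
  have hdy : ∀ k : ℕ, δ * (lam^2)^k ≤ A (T₁ * 2^k) := by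
    intro k
    induction k with
    | zero =>
      have h1 : δ ≤ A T₁ := by rw [hδdef]; exact min_le_left _ _
      simpa using h1
    | succ k ih =>
      set tk : ℝ := T₁ * 2^k with htkdef
      have h2k : (1:ℝ) ≤ 2^k := one_le_pow₀ one_le_two
      have htk1 : T₁ ≤ tk := le_mul_of_one_le_right hT₁0.le h2k
      have htk0 : 0 < tk := lt_of_lt_of_le hT₁0 htk1
      have hnext : T₁ * 2^(k+1) = tk + tk := by rw [htkdef, pow_succ]; ring
      have hstep2 := hgrow2 tk (tk + tk) htk1 (by linarith)
      have h2tk : (2:ℝ)^k ≤ tk := le_mul_of_one_le_left (by positivity) hT₁1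
      have hfac : (2:ℝ)^(k*(m-1)) * 2^k ≤ tk^(n-3) * tk := by
        have h1 : ((2:ℝ)^k)^(m-1) ≤ tk^(m-1) := pow_le_pow_left₀ (by positivity) h2tk _
        rw [hn3]
        calc (2:ℝ)^(k*(m-1)) * 2^k = ((2:ℝ)^k)^(m-1) * 2^k := by rw [← pow_mul]
          _ ≤ tk^(m-1) * tk := mul_le_mul h1 h2tk (by positivity) (by positivity)
      have hsa : Real.sqrt (δ/K) * lam^k ≤ Real.sqrt (A tk / K) := by
        have h1 : δ*(lam^2)^k / K ≤ A tk / K := by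
          have h2 := mul_le_mul_of_nonneg_right ih (le_of_lt (inv_pos.2 hKpos))
          simpa [div_eq_mul_inv] using h2
        have h2 : Real.sqrt (δ*(lam^2)^k / K) = Real.sqrt (δ/K) * lam^k := by
          rw [show δ*(lam^2)^k / K = (δ/K) * (lam^k)^2 by
            rw [← pow_mul, mul_comm 2 k, pow_mul]; ring]
          rw [Real.sqrt_mul (by positivity) _, Real.sqrt_sq (by positivity)]
        rw [← h2]
        exact Real.sqrt_le_sqrt h1
      have hFk := hFsqrt tk htk1
      have hprod : lam^k * ((2:ℝ)^(k*(m-1)) * 2^k) = (lam^2)^k := by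
        rw [hlamdef, ← pow_mul, ← pow_mul, ← pow_add, ← pow_mul, ← pow_add]
        congr 1
        have h9 : k*(m-1)+k = k*m := by
          calc k*(m-1)+k = k*((m-1)+1) := by ring
            _ = k*m := by rw [Nat.sub_add_cancel hm1]
        rw [h9]
        ring
      have hstep3 : Real.sqrt (δ/K) * (lam^2)^k ≤ F tk * (tk^(n-3) * tk) := by
        calc Real.sqrt (δ/K) * (lam^2)^k
            = (Real.sqrt (δ/K) * lam^k) * ((2:ℝ)^(k*(m-1)) * 2^k) := by
              rw [← hprod]; ring
          _ ≤ Real.sqrt (A tk/K) * (tk^(n-3) * tk) := by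
              apply mul_le_mul hsa hfac (by positivity) (Real.sqrt_nonneg _)
          _ ≤ F tk * (tk^(n-3) * tk) := by
              apply mul_le_mul_of_nonneg_right hFk
              positivity
      rw [hnext]
      have h1 : A tk + F tk * tk^(n-3) * (tk + tk - tk) ≤ A (tk+tk) := hstep2
      have h2 : tk + tk - tk = tk := by ring
      rw [h2] at h1
      have h3 := mul_le_mul_of_nonneg_right hcond (by positivity : (0:ℝ) ≤ (lam^2)^k)
      have h4 : δ * (lam^2)^(k+1) = δ*(lam^2)^k + δ*(lam^2-1)*(lam^2)^k := by
        rw [pow_succ]; ring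
      nlinarith [ih, hstep3, h1, h3, h4]
  -- conclusion
  have hT₁ne : T₁ ≠ 0 := ne_of_gt hT₁0
  have hlamne : lam ≠ 0 := ne_of_gt hlampos
  refine ⟨δ/(lam^2 * T₁^(2*m)), by positivity, ?_⟩
  rw [eventually_atTop]
  refine ⟨T₁, fun t ht => ?_⟩
  have htpos : 0 < t := lt_of_lt_of_le hT₁0 ht
  have hex : ∃ k : ℕ, t < T₁ * 2^k := by
    obtain ⟨k, hk⟩ := pow_unbounded_of_one_lt t (one_lt_two : (1:ℝ) < 2)
    exact ⟨k, lt_of_lt_of_le hk (le_mul_of_one_le_left (by positivity) hT₁1)⟩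
  obtain ⟨k, hk1, hk2⟩ : ∃ k : ℕ, T₁ * 2^k ≤ t ∧ t < T₁ * 2^(k+1) := by
    have hfind := Nat.find_spec hex
    have h0 : Nat.find hex ≠ 0 := by
      intro h0
      rw [h0] at hfind
      simp only [pow_zero, mul_one] at hfind
      linarith
    obtain ⟨k, hjk⟩ := Nat.exists_eq_succ_of_ne_zero h0
    rw [hjk] at hfind
    refine ⟨k, ?_, hfind⟩
    have h5 := Nat.find_min hex (m := k) (by omega)
    push_neg at h5
    exact h5
  have hAk := hdy k
  have h2k : (1:ℝ) ≤ 2^k := one_le_pow₀ one_le_two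
  have hTk : T₁ ≤ T₁*2^k := le_mul_of_one_le_right hT₁0.le h2k
  have hAt : A (T₁*2^k) ≤ A t := hAmono (T₁*2^k) t (hTT₁.trans hTk) (by positivity) hk1
  have hpow : t^(2*n-4) ≤ T₁^(2*m) * (lam^2)^(k+1) := by
    rw [h2n4]
    calc t^(2*m) ≤ (T₁*2^(k+1))^(2*m) := pow_le_pow_left₀ htpos.le hk2.le _
      _ = T₁^(2*m) * (lam^2)^(k+1) := by
        rw [mul_pow, hlamdef, ← pow_mul, ← pow_mul, ← pow_mul]
        congr 1
        ring
  have hc0 : 0 ≤ δ/(lam^2 * T₁^(2*m)) := by positivity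
  have h5 := mul_le_mul_of_nonneg_left hpow hc0
  have h6 : δ/(lam^2 * T₁^(2*m)) * (T₁^(2*m) * (lam^2)^(k+1)) = δ * (lam^2)^k := by
    field_simp
    ring
  rw [h6] at h5
  linarith [hAk, hAt, h5]
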